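/- arXiv:1511.00144 — 3 statements merged into one kernel-verified Lean document; each statement's English description precedes it below -/
import Mathlib

section
/- For every integer t ≥ 1, the family of sets 𝒮(γ), where γ ranges over the reduced elements of Γ^t, forms a partition of the symmetric group on {0,1,…,t}: every permutation σ of {0,1,…,t} belongs to 𝒮(γ) for exactly one reduced element γ of Γ^t. -/
/-!
Combinatorics of `Γ^t` (Boyer, "Le lemme d'Ihara pour les groupes unitaires").
Signs `{+,−}` are encoded as `Bool`, with `true = +` and `false = −`.
-/

/-- Membership in `Γ^t`: a nonempty sequence whose entries `aᵢ` sum to `t`. -/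
def InGamma (t : ℕ) (l : List (ℕ × Bool)) : Prop :=
  l ≠ [] ∧ (l.map Prod.fst).sum = t

/-- A sequence is reduced if all its entries `aᵢ` are strictly positive and
consecutive signs alternate. -/
def GammaReduced (l : List (ℕ × Bool)) : Prop :=
  (∀ p ∈ l, 0 < p.1) ∧ l.Chain' (fun p q => p.2 ≠ q.2)

/-- Partial sums: `partialSum l i = a₁ + ⋯ + aᵢ` (so `partialSum l 0 = 0`). -/
def partialSum (l : List (ℕ × Bool)) (i : ℕ) : ℕ :=
  ((l.take i).map Prod.fst).sum

/-- The set `𝒮(γ)` of permutations `σ` of `{0,1,…,t}` such that for every block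
`1 ≤ i ≤ r` and all `s_{i-1} ≤ k < k' ≤ s_i`, one has `σ⁻¹(k) < σ⁻¹(k')` if `εᵢ = +`
and `σ⁻¹(k) > σ⁻¹(k')` if `εᵢ = −`.  (Blocks are indexed from `0` here.) -/
def ScriptS (t : ℕ) (l : List (ℕ × Bool)) : Set (Equiv.Perm (Fin (t + 1))) :=
  {σ | ∀ i (hi : i < l.length), ∀ k k' : Fin (t + 1),
    partialSum l i ≤ (k : ℕ) → (k : ℕ) < (k' : ℕ) → (k' : ℕ) ≤ partialSum l (i + 1) →
    if (l.get ⟨i, hi⟩).2 = true then σ⁻¹ k < σ⁻¹ k' else σ⁻¹ k' < σ⁻¹ k}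

/-- The set `𝒮^op(γ)`, defined by the same condition as `𝒮(γ)` with both inequalities
on `σ⁻¹` reversed. -/
def ScriptSop (t : ℕ) (l : List (ℕ × Bool)) : Set (Equiv.Perm (Fin (t + 1))) :=
  {σ | ∀ i (hi : i < l.length), ∀ k k' : Fin (t + 1),
    partialSum l i ≤ (k : ℕ) → (k : ℕ) < (k' : ℕ) → (k' : ℕ) ≤ partialSum l (i + 1) →
    if (l.get ⟨i, hi⟩).2 = true then σ⁻¹ k' < σ⁻¹ k else σ⁻¹ k < σ⁻¹ k'}


section GammaAux

def expandL (l : List (ℕ × Bool)) : List Bool := l.flatMap fun p => List.replicate p.1 p.2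

lemma expandL_length (l : List (ℕ × Bool)) : (expandL l).length = (l.map Prod.fst).sum := by
  induction l with
  | nil => simp [expandL]
  | cons p r ih => simp [expandL] at *

def rle : List Bool → List (ℕ × Bool)
  | [] => []
  | b :: bs => match rle bs with
    | [] => [(1, b)]
    | (a, c) :: r => if b = c then (a+1, c) :: r else (1, b) :: (a, c) :: r

lemma expandL_rle (bs : List Bool) : expandL (rle bs) = bs := by
  induction bs with
  | nil => simp [rle, expandL]
  | cons b bs ih =>
    rw [rle]
    rcases h : rle bs with _ | ⟨⟨a, c⟩, r⟩
    · rw [h] at ih; simp [expandL] at ih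
      simp [expandL, ih]
    · rw [h] at ih
      by_cases hbc : b = c
      · subst hbc
        simp only [if_pos rfl]
        simp [expandL, List.replicate_succ] at ih ⊢
        simpa using ih
      · simp only [if_neg hbc]
        simp [expandL] at ih ⊢
        simpa using ih

lemma rle_reduced (bs : List Bool) : GammaReduced (rle bs) ∧
    (∀ a c r, rle bs = (a, c) :: r → bs.head? = some c) := by
  induction bs with
  | nil => simp [rle, GammaReduced, List.Chain']
  | cons b bs ih =>
    rw [rle]
    rcases h : rle bs with _ | ⟨⟨a, c⟩, r⟩ <;> dsimp only
    · refine ⟨⟨by simp, by simp [List.Chain']⟩, ?_⟩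
      intro a' c' r' he
      simp at he
      simp [he.1.2]
    · rw [h] at ih
      obtain ⟨⟨hpos, hchain⟩, hhead⟩ := ih
      by_cases hbc : b = c
      · subst hbc
        rw [if_pos rfl]
        refine ⟨⟨?_, ?_⟩, ?_⟩
        · intro p hp
          rcases List.mem_cons.mp hp with hp | hp
          · subst hp; omega
          · exact hpos p (List.mem_cons_of_mem _ hp)
        · rcases r with _ | ⟨q, r'⟩
          · simp [List.Chain']
          · rw [List.Chain', List.isChain_cons_cons] at hchain ⊢
            exact ⟨hchain.1, hchain.2⟩
        · intro a' c' r' he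
          simp at he
          simp [he.1.2]
      · rw [if_neg hbc]
        refine ⟨⟨?_, ?_⟩, ?_⟩
        · intro p hp
          rcases List.mem_cons.mp hp with hp | hp
          · subst hp; omega
          · exact hpos p hp
        · rw [List.Chain', List.isChain_cons_cons]
          exact ⟨hbc, hchain⟩
        · intro a' c' r' he
          simp at he
          simp [he.1.2]

lemma rle_rep : ∀ a, 0 < a → ∀ (c : Bool) (r : List (ℕ × Bool)),
    rle (expandL r) = r → (∀ p ∈ r.head?, p.2 ≠ c) →
    rle (List.replicate a c ++ expandL r) = (a, c) :: r := by
  intro a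
  induction a with
  | zero => omega
  | succ a ih =>
    intro _ c r hr hhead
    rcases Nat.eq_zero_or_pos a with ha | ha
    · subst ha
      simp only [List.replicate_succ, List.replicate_zero, List.nil_append, List.cons_append,
        List.nil_append]
      rw [rle, hr]
      rcases r with _ | ⟨⟨a', c'⟩, r'⟩
      · rfl
      · have : c' ≠ c := hhead (a', c') (by simp)
        simp [Ne.symm this]
    · have := ih ha c r hr hhead
      rw [List.replicate_succ, List.cons_append, rle, this]
      simp

lemma rle_expandL (l : List (ℕ × Bool)) (h : GammaReduced l) : rle (expandL l) = l := by
  induction l with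
  | nil => simp [rle, expandL]
  | cons p r ih =>
    obtain ⟨hpos, hchain⟩ := h
    have hr : GammaReduced r := ⟨fun q hq => hpos q (List.mem_cons_of_mem _ hq), hchain.tail⟩
    have hhead : ∀ q ∈ r.head?, q.2 ≠ p.2 := by
      intro q hq
      rcases r with _ | ⟨q', r'⟩
      · simp at hq
      · simp at hq; subst hq
        exact Ne.symm (List.isChain_cons_cons.mp hchain).1
    have he : expandL (p :: r) = List.replicate p.1 p.2 ++ expandL r := by simp [expandL]
    rw [he, rle_rep p.1 (hpos p (List.mem_cons_self)) p.2 r (ih hr) hhead]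

lemma partialSum_succ_cons (p : ℕ × Bool) (r : List (ℕ × Bool)) (i : ℕ) :
    partialSum (p :: r) (i + 1) = p.1 + partialSum r i := by
  simp [partialSum, List.take_succ_cons]

lemma partialSum_zero (l : List (ℕ × Bool)) : partialSum l 0 = 0 := rfl

lemma partialSum_le_sum (l : List (ℕ × Bool)) (i : ℕ) :
    partialSum l i ≤ (l.map Prod.fst).sum := by
  induction l generalizing i with
  | nil => simp [partialSum]
  | cons p r ih =>
    cases i with
    | zero => simp [partialSum]
    | succ i => rw [partialSum_succ_cons]; simp; have := ih i; omega

lemma expandL_getElem? (l : List (ℕ × Bool)) (i k : ℕ) (hi : i < l.length)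
    (h1 : partialSum l i ≤ k) (h2 : k < partialSum l (i + 1)) :
    (expandL l)[k]? = some (l.get ⟨i, hi⟩).2 := by
  induction l generalizing i k with
  | nil => simp at hi
  | cons p r ih =>
    have hexp : expandL (p :: r) = List.replicate p.1 p.2 ++ expandL r := by simp [expandL]
    cases i with
    | zero =>
      rw [partialSum_succ_cons, partialSum_zero, Nat.add_zero] at h2
      rw [hexp, List.getElem?_append_left (by simpa using h2)]
      simp [List.getElem?_replicate, h2]
    | succ i =>
      rw [partialSum_succ_cons] at h1 h2
      have hp1 : p.1 ≤ k := le_trans (Nat.le_add_right _ _) h1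
      rw [hexp, List.getElem?_append_right (by simpa using hp1)]
      simp only [List.length_replicate]
      exact ih i (k - p.1) (by simpa using hi) (by omega) (by omega)

lemma exists_block (l : List (ℕ × Bool)) (k : ℕ) (hk : k < (l.map Prod.fst).sum) :
    ∃ i, ∃ hi : i < l.length, partialSum l i ≤ k ∧ k < partialSum l (i + 1) := by
  induction l generalizing k with
  | nil => simp at hk
  | cons p r ih =>
    by_cases h : k < p.1
    · exact ⟨0, by simp, by simp [partialSum], by rw [partialSum_succ_cons, partialSum_zero]; omega⟩
    · have hk2 : k - p.1 < (r.map Prod.fst).sum := by simp at hk; omega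
      obtain ⟨i, hi, ha, hb⟩ := ih (k - p.1) hk2
      exact ⟨i + 1, by simpa using hi, by rw [partialSum_succ_cons]; omega,
        by rw [partialSum_succ_cons]; omega⟩

lemma mem_ScriptS_gap (t : ℕ) (σ : Equiv.Perm (Fin (t+1))) (l : List (ℕ × Bool))
    (hsum : (l.map Prod.fst).sum = t) (hσ : σ ∈ ScriptS t l) (k : ℕ) (hk : k < t) :
    (expandL l)[k]? =
      some (decide ((σ⁻¹ ⟨k, by omega⟩ : Fin (t+1)) < σ⁻¹ ⟨k + 1, by omega⟩)) := by
  obtain ⟨i, hi, ha, hb⟩ := exists_block l k (by omega)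
  rw [expandL_getElem? l i k hi ha hb]
  have hmem := hσ i hi ⟨k, by omega⟩ ⟨k + 1, by omega⟩ ha (by simp) hb
  cases he : (l.get ⟨i, hi⟩).2 with
  | true =>
    rw [he, if_pos rfl] at hmem
    exact congrArg some (decide_eq_true hmem).symm
  | false =>
    rw [he] at hmem
    simp only [Bool.false_eq_true, if_false] at hmem
    exact congrArg some (decide_eq_false (not_lt_of_gt hmem)).symm

lemma gap_mem_ScriptS (t : ℕ) (σ : Equiv.Perm (Fin (t+1))) (l : List (ℕ × Bool))
    (hsum : (l.map Prod.fst).sum = t)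
    (h : ∀ k (hk : k < t), (expandL l)[k]? =
      some (decide ((σ⁻¹ ⟨k, by omega⟩ : Fin (t+1)) < σ⁻¹ ⟨k + 1, by omega⟩))) :
    σ ∈ ScriptS t l := by
  intro i hi k k' h1 h2 h3
  have hs' : partialSum l (i + 1) ≤ t := hsum ▸ partialSum_le_sum l (i + 1)
  set e := (l.get ⟨i, hi⟩).2 with hedef
  set R : Fin (t+1) → Fin (t+1) → Prop :=
    fun x y => if e = true then x < y else y < x with hR
  have hRtrans : ∀ a b c, R a b → R b c → R a c := by
    intro a b c hab hbc
    simp only [hR] at *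
    split at hab <;> split at hbc <;> simp_all <;> omega
  have hgap : ∀ j (hja : partialSum l i ≤ j) (hjb : j + 1 ≤ partialSum l (i + 1)),
      R (σ⁻¹ ⟨j, by omega⟩) (σ⁻¹ ⟨j + 1, by omega⟩) := by
    intro j hja hjb
    have hjt : j < t := by omega
    have hj := h j hjt
    rw [expandL_getElem? l i j hi hja (by omega)] at hj
    have hd : decide ((σ⁻¹ ⟨j, by omega⟩ : Fin (t+1)) < σ⁻¹ ⟨j + 1, by omega⟩) = e :=
      (Option.some.inj hj).symm
    simp only [hR]
    split
    · next het => rw [het] at hd; exact of_decide_eq_true hd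
    · next hef =>
      have hef2 : e = false := by simpa using hef
      rw [hef2] at hd
      have hnot := of_decide_eq_false hd
      have hne : (σ⁻¹ ⟨j + 1, by omega⟩ : Fin (t+1)) ≠ σ⁻¹ ⟨j, by omega⟩ := by
        intro hcon
        have := σ⁻¹.injective hcon
        simp [Fin.ext_iff] at this
      exact lt_of_le_of_ne (le_of_not_gt hnot) hne
  have key : ∀ k0 (hk0 : partialSum l i ≤ k0), ∀ n (hn1 : k0 + 1 ≤ n)
      (hn2 : n ≤ partialSum l (i + 1)),
      R (σ⁻¹ ⟨k0, by omega⟩) (σ⁻¹ ⟨n, by omega⟩) := by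
    intro k0 hk0 n
    induction n with
    | zero => omega
    | succ n ihn =>
      intro hn1 hn2
      rcases Nat.lt_or_ge k0 n with hc | hc
      · have hstep := hgap n (by omega) (by omega)
        exact hRtrans _ _ _ (ihn (by omega) (by omega)) hstep
      · have : n = k0 := by omega
        subst this
        exact hgap n hk0 hn2
  exact key (k : ℕ) h1 (k' : ℕ) h2 h3

end GammaAux

/-- For `t ≥ 1`, the sets `𝒮(γ)`, for `γ` ranging over the reduced elements of `Γ^t`,
partition the symmetric group on `{0,1,…,t}`: every permutation belongs to `𝒮(γ)` for
exactly one reduced `γ ∈ Γ^t`. -/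
theorem ScriptS_partition (t : ℕ) (ht : 1 ≤ t) (σ : Equiv.Perm (Fin (t + 1))) :
    ∃! l : List (ℕ × Bool), (InGamma t l ∧ GammaReduced l) ∧ σ ∈ ScriptS t l := by
  set B : List Bool := List.ofFn (fun k : Fin t =>
    decide ((σ⁻¹ ⟨k.1, by omega⟩ : Fin (t+1)) < σ⁻¹ ⟨k.1 + 1, by omega⟩)) with hB
  have hBlen : B.length = t := by simp [hB]
  have hBget : ∀ k (hk : k < t), B[k]? =
      some (decide ((σ⁻¹ ⟨k, by omega⟩ : Fin (t+1)) < σ⁻¹ ⟨k + 1, by omega⟩)) := by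
    intro k hk
    simp only [hB, List.getElem?_ofFn, List.ofFnNthVal, hk, dif_pos]
  have hexp : expandL (rle B) = B := expandL_rle B
  have hsum0 : ((rle B).map Prod.fst).sum = t := by
    rw [← expandL_length, hexp, hBlen]
  refine ⟨rle B, ⟨⟨⟨?_, hsum0⟩, (rle_reduced B).1⟩, ?_⟩, ?_⟩
  · intro hnil
    rw [hnil] at hexp
    simp [expandL] at hexp
    rw [hexp] at hBlen
    simp at hBlen
    omega
  · refine gap_mem_ScriptS t σ (rle B) hsum0 ?_
    intro k hk
    rw [hexp, hBget k hk]
  · rintro l' ⟨⟨⟨hne, hsum⟩, hred⟩, hmem⟩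
    have h1 : expandL l' = B := by
      refine List.ext_getElem? ?_
      intro n
      rcases Nat.lt_or_ge n t with hn | hn
      · rw [mem_ScriptS_gap t σ l' hsum hmem n hn, hBget n hn]
      · rw [List.getElem?_eq_none (by rw [expandL_length, hsum]; omega),
          List.getElem?_eq_none (by omega)]
    calc l' = rle (expandL l') := (rle_expandL l' hred).symm
      _ = rle B := by rw [h1]
end

section
/- Let O be a discrete valuation ring with uniformizer π, fraction field K and residue field k = O/(π), let V be a finite-dimensional K-vector space, let G be a group and ρ : G → GL(V) a representation. Let L ⊆ V be a G-stable lattice (a finitely generated O-submodule of V that spans V over K and satisfies ρ(g)L = L for all g ∈ G) and assume that the only G-stable O-submodules L'' with πL ⊆ L'' ⊆ L are πL and L itself (i.e. the reduction L/πL is a simple module under the induced G-action). Then every G-stable lattice L' ⊆ V is homothetic to L: there exists c ∈ K^× with L' = c·L. -/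
open Pointwise

section Aux

variable {O K V : Type*} [CommRing O] [Field K] [Algebra O K]
  [AddCommGroup V] [Module K V] [Module O V] [IsScalarTower O K V]

/-- Scalar multiplication by `c : K`, as an `O`-linear endomorphism of `V`. -/
def scAux (O : Type*) [CommRing O] {K V : Type*} [Field K] [Algebra O K]
    [AddCommGroup V] [Module K V] [Module O V] [IsScalarTower O K V]
    (c : K) : V →ₗ[O] V := (LinearMap.lsmul K V c).restrictScalars O

lemma scAux_apply (c : K) (x : V) : scAux O c x = c • x := rfl

lemma map_scAux_map_scAux (c d : K) (M : Submodule O V) :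
    (M.map (scAux O c)).map (scAux O d) = M.map (scAux O (d * c)) := by
  rw [← Submodule.map_comp]
  congr 1
  ext x
  simp only [LinearMap.coe_comp, Function.comp_apply, scAux_apply]
  rw [smul_smul]

lemma map_scAux_comm (c : K) (e : V ≃ₗ[K] V) (M : Submodule O V) :
    (M.map (scAux O c)).map (e.toLinearMap.restrictScalars O)
      = (M.map (e.toLinearMap.restrictScalars O)).map (scAux O c) := by
  rw [← Submodule.map_comp, ← Submodule.map_comp]
  congr 1
  ext x
  simp only [LinearMap.coe_comp, Function.comp_apply, scAux_apply,
    LinearMap.coe_restrictScalars, LinearEquiv.coe_coe]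
  exact map_smul e c x

lemma map_lsmul_comm (a : O) (e : V ≃ₗ[K] V) (M : Submodule O V) :
    (M.map (LinearMap.lsmul O V a)).map (e.toLinearMap.restrictScalars O)
      = (M.map (e.toLinearMap.restrictScalars O)).map (LinearMap.lsmul O V a) := by
  rw [← Submodule.map_comp, ← Submodule.map_comp]
  congr 1
  ext x
  simp only [LinearMap.coe_comp, Function.comp_apply, LinearMap.lsmul_apply,
    LinearMap.coe_restrictScalars, LinearEquiv.coe_coe]
  exact map_smul (e.toLinearMap.restrictScalars O) a x

/-- Clearing denominators: a finitely generated submodule can be multiplied into any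
submodule that spans `V` over `K`. -/
lemma exists_denom [IsDomain O] [IsFractionRing O K]
    (L M : Submodule O V) (hM : M.FG) (hLs : Submodule.span K (L : Set V) = ⊤) :
    ∃ a : O, a ≠ 0 ∧ ∀ y ∈ M, a • y ∈ L := by
  classical
  have hone : ∀ v : V, ∃ a : O, a ≠ 0 ∧ a • v ∈ L := by
    intro v
    have hv : v ∈ Submodule.span K (L : Set V) := by rw [hLs]; trivial
    rw [Submodule.mem_span_set'] at hv
    obtain ⟨n, f, g, hg⟩ := hv
    obtain ⟨b, hb⟩ := IsLocalization.exist_integer_multiples (nonZeroDivisors O)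
      (Finset.univ : Finset (Fin n)) f
    refine ⟨(b : O), nonZeroDivisors.coe_ne_zero b, ?_⟩
    rw [← hg, Finset.smul_sum]
    refine Submodule.sum_mem _ fun i _ => ?_
    obtain ⟨c, hc⟩ := hb i (Finset.mem_univ i)
    have : (b : O) • (f i • (g i : V)) = c • (g i : V) := by
      rw [← smul_assoc]
      have : (b : O) • f i = algebraMap O K c := hc.symm
      rw [this, algebraMap_smul]
    rw [this]
    exact L.smul_mem c (g i).2
  obtain ⟨s, hs⟩ := hM
  have hchoice : ∀ x : V, ∃ a : O, a ≠ 0 ∧ (x ∈ s → a • x ∈ L) := by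
    intro x
    by_cases hx : x ∈ s
    · obtain ⟨a, ha, ha'⟩ := hone x
      exact ⟨a, ha, fun _ => ha'⟩
    · exact ⟨1, one_ne_zero, fun h => absurd h hx⟩
  choose a ha ha' using hchoice
  refine ⟨∏ x ∈ s, a x, Finset.prod_ne_zero_iff.2 fun x _ => ha x, ?_⟩
  intro y hy
  have hy' : y ∈ Submodule.span O (s : Set V) := by rw [hs]; exact hy
  have hle : Submodule.span O (s : Set V)
      ≤ L.comap (LinearMap.lsmul O V (∏ x ∈ s, a x)) := by
    rw [Submodule.span_le]
    intro x hx
    simp only [SetLike.mem_coe, Submodule.mem_comap, LinearMap.lsmul_apply]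
    rw [← Finset.mul_prod_erase s a hx, mul_comm, mul_smul]
    exact L.smul_mem _ (ha' x hx)
  exact hle hy'

/-- An O-lattice cannot contain a sequence `f 0, f 1, ...` with `π • f (m+1) = f m`
starting from a nonzero vector: this would be an infinite ascending chain. -/
lemma no_divisible_line [IsDomain O] [IsNoetherianRing O] [IsFractionRing O K]
    {π : O} (hπ : Irreducible π)
    (L : Submodule O V) (hfg : L.FG) (f : ℕ → V) (hfL : ∀ m, f m ∈ L)
    (hf0 : f 0 ≠ 0) (hstep : ∀ m, (algebraMap O K π) • f (m + 1) = f m) : False := by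
  have hinj : Function.Injective (algebraMap O K) := IsFractionRing.injective O K
  have hNoeth : IsNoetherian O L := isNoetherian_of_fg_of_noetherian L hfg
  have hfne : ∀ m, f m ≠ 0 := by
    intro m
    induction m with
    | zero => exact hf0
    | succ n ih =>
      intro h
      apply ih
      rw [← hstep n, h, smul_zero]
  have hmono : Monotone (fun m => Submodule.span O ({⟨f m, hfL m⟩} : Set L)) := by
    apply monotone_nat_of_le_succ
    intro m
    rw [Submodule.span_le]
    intro x hx
    rw [Set.mem_singleton_iff] at hx
    subst hx
    rw [SetLike.mem_coe, Submodule.mem_span_singleton]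
    refine ⟨π, ?_⟩
    apply Subtype.ext
    show π • f (m + 1) = f m
    rw [← algebraMap_smul K π (f (m + 1)), hstep m]
  obtain ⟨n, hn⟩ := monotone_stabilizes_iff_noetherian.mpr hNoeth ⟨_, hmono⟩
  have h1 : (⟨f (n + 1), hfL _⟩ : L) ∈ Submodule.span O ({⟨f n, hfL n⟩} : Set L) := by
    have := hn (n + 1) (Nat.le_succ n)
    simp only [OrderHom.coe_mk] at this
    rw [this]
    exact Submodule.mem_span_singleton_self _
  obtain ⟨c, hc⟩ := Submodule.mem_span_singleton.1 h1
  have hcV : c • f n = f (n + 1) := congrArg Subtype.val hc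
  have key : (algebraMap O K (π * c)) • f n = f n := by
    rw [map_mul, mul_smul, algebraMap_smul K c, hcV, hstep n]
  have hzero : (algebraMap O K (π * c) - 1) • f n = 0 := by
    rw [sub_smul, one_smul, key, sub_self]
  rcases smul_eq_zero.1 hzero with h | h
  · have h' : algebraMap O K (π * c) = algebraMap O K 1 := by
      rw [map_one]
      exact sub_eq_zero.1 h
    have : π * c = 1 := hinj h'
    exact hπ.not_isUnit (IsUnit.of_mul_eq_one (a := π) c this)
  · exact hfne n h

end Aux

/-- A `G`-stable lattice in a finite-dimensional `K`-vector space `V`, where `K` is the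
fraction field of a discrete valuation ring `O`: a finitely generated `O`-submodule of
`V` which spans `V` over `K` and is mapped onto itself by every `ρ g`. -/
def IsStableLattice {O K V G : Type*} [CommRing O] [Field K] [Algebra O K]
    [AddCommGroup V] [Module K V] [Module O V] [IsScalarTower O K V]
    [Group G] (ρ : G →* (V ≃ₗ[K] V)) (L : Submodule O V) : Prop :=
  L.FG ∧ Submodule.span K (L : Set V) = ⊤ ∧
    ∀ g : G, L.map ((ρ g).toLinearMap.restrictScalars O) = L

/-- Let `O` be a discrete valuation ring with uniformizer `π` and fraction field `K`,
`V` a finite-dimensional `K`-vector space with a representation `ρ : G → GL(V)`, and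
`L ⊆ V` a `G`-stable lattice such that the only `G`-stable `O`-submodules `L''` with
`πL ⊆ L'' ⊆ L` are `πL` and `L` (i.e. `L/πL` is simple).  Then every `G`-stable lattice
`L' ⊆ V` is homothetic to `L`: there is `c ∈ K^×` with `L' = c·L`. -/
theorem stable_lattice_unique_up_to_homothety
    {O K V G : Type*} [CommRing O] [IsDomain O] [IsDiscreteValuationRing O]
    [Field K] [Algebra O K] [IsFractionRing O K]
    [AddCommGroup V] [Module K V] [FiniteDimensional K V]
    [Module O V] [IsScalarTower O K V]
    [Group G] (ρ : G →* (V ≃ₗ[K] V))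
    (π : O) (hπ : Irreducible π)
    (L : Submodule O V) (hL : IsStableLattice ρ L)
    (hsimple : ∀ L'' : Submodule O V,
      (∀ g : G, L''.map ((ρ g).toLinearMap.restrictScalars O) = L'') →
      L.map (LinearMap.lsmul O V π) ≤ L'' → L'' ≤ L →
      L'' = L.map (LinearMap.lsmul O V π) ∨ L'' = L)
    (L' : Submodule O V) (hL' : IsStableLattice ρ L') :
    ∃ c : Kˣ, L' = L.map ((LinearMap.lsmul K V (c : K)).restrictScalars O) := by
  rcases subsingleton_or_nontrivial V with hV | hV
  · exact ⟨1, Subsingleton.elim _ _⟩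
  have hinj : Function.Injective (algebraMap O K) := IsFractionRing.injective O K
  -- clear denominators
  obtain ⟨a, ha0, ha⟩ := exists_denom L L' hL'.1 hL.2.1
  have hA0 : algebraMap O K a ≠ 0 := fun h => ha0 (hinj (by rw [h, map_zero]))
  have hp0 : algebraMap O K π ≠ 0 := fun h => hπ.ne_zero (hinj (by rw [h, map_zero]))
  set p : K := algebraMap O K π with hpdef
  set A : K := algebraMap O K a with hAdef
  -- the scaling predicate
  set P : ℤ → Prop := fun n => ∀ y ∈ L', (p ^ n * A) • y ∈ L with hP
  have hP0 : P 0 := by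
    intro y hy
    rw [zpow_zero, one_mul, hAdef, algebraMap_smul]
    exact ha y hy
  have hsmulp : ∀ (k : K) (y : V), (p * k) • y = π • (k • y) := by
    intro k y
    rw [mul_smul, hpdef, algebraMap_smul]
  have hPstep : ∀ n : ℤ, P n → P (n + 1) := by
    intro n hn y hy
    have h1 : p ^ (n + 1) * A = p * (p ^ n * A) := by
      rw [zpow_add_one₀ hp0]; ring
    rw [h1, hsmulp]
    exact L.smul_mem π (hn y hy)
  have hPmono : ∀ n m : ℤ, n ≤ m → P n → P m := by
    intro n m hnm hPn
    exact Int.le_induction hPn (fun k _ ih => hPstep k ih) m hnm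
  -- a nonzero element of L'
  obtain ⟨v0, hv0L, hv0⟩ : ∃ v ∈ L', v ≠ 0 := by
    by_contra h
    push_neg at h
    have hb : Submodule.span K (L' : Set V) ≤ ⊥ := by
      rw [Submodule.span_le]
      intro x hx
      simp [h x hx]
    rw [hL'.2.1, top_le_iff] at hb
    obtain ⟨x, hx⟩ := exists_ne (0 : V)
    have : x ∈ (⊥ : Submodule K V) := hb ▸ Submodule.mem_top
    exact hx ((Submodule.mem_bot K).1 this)
  -- boundedness of P below
  have hbdd : ∃ b : ℤ, ∀ z : ℤ, P z → b ≤ z := by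
    by_contra hcon
    push_neg at hcon
    have hall : ∀ m : ℕ, P (-(m : ℤ)) := by
      intro m
      obtain ⟨n, hn, hlt⟩ := hcon (-(m : ℤ))
      exact hPmono n _ (le_of_lt hlt) hn
    refine no_divisible_line (K := K) hπ L hL.1
      (fun m => (p ^ (-(m : ℤ)) * A) • v0)
      (fun m => hall m v0 hv0L) ?_ ?_
    · simp only [Nat.cast_zero, neg_zero, zpow_zero, one_mul]
      exact smul_ne_zero hA0 hv0
    · intro m
      rw [← hpdef, ← mul_smul]
      congr 1
      rw [← mul_assoc, mul_comm p, ← zpow_add_one₀ hp0]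
      congr 2
      omega
  obtain ⟨n, hPn, hmin⟩ := Int.exists_least_of_bdd hbdd ⟨0, hP0⟩
  -- the scaling factor
  have hpnA0 : p ^ n * A ≠ 0 := mul_ne_zero (zpow_ne_zero n hp0) hA0
  set c : Kˣ := Units.mk0 (p ^ n * A) hpnA0 with hcdef
  have hc : (c : K) = p ^ n * A := rfl
  set cL' : Submodule O V := L'.map (scAux O (c : K)) with hcL'
  set piL : Submodule O V := L.map (LinearMap.lsmul O V π) with hpiL
  have hsub : cL' ≤ L := by
    rintro x ⟨y, hy, rfl⟩
    rw [scAux_apply, hc]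
    exact hPn y hy
  have hpiLle : piL ≤ L := by
    rintro x ⟨y, hy, rfl⟩
    exact L.smul_mem π hy
  have hnotin : ¬ cL' ≤ piL := by
    intro hle
    have hPn1 : P (n - 1) := by
      intro y hy
      have hcyL : (c : K) • y ∈ piL := hle ⟨y, hy, rfl⟩
      obtain ⟨z, hz, hz'⟩ := hcyL
      have hz'' : p • z = (c : K) • y := by
        rw [← hz']
        show p • z = π • z
        rw [hpdef, algebraMap_smul]
      have hcomp : p • ((p ^ (n - 1) * A) • y) = p • z := by
        rw [hz'', hc, ← mul_smul, ← mul_assoc, mul_comm p, ← zpow_add_one₀ hp0,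
          sub_add_cancel]
      have h3 : (p ^ (n - 1) * A) • y = z := smul_right_injective V hp0 hcomp
      rw [h3]
      exact hz
    have := hmin (n - 1) hPn1
    omega
  -- the intermediate module
  set L'' : Submodule O V := cL' ⊔ piL with hLpp
  have hstab : ∀ g : G, L''.map ((ρ g).toLinearMap.restrictScalars O) = L'' := by
    intro g
    rw [hLpp, Submodule.map_sup]
    congr 1
    · rw [hcL', map_scAux_comm, hL'.2.2 g]
    · rw [hpiL, map_lsmul_comm, hL.2.2 g]
  rcases hsimple L'' hstab le_sup_right (sup_le hsub hpiLle) with h | h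
  · exact absurd (le_sup_left.trans (le_of_eq h)) hnotin
  -- Nakayama
  have hmax : IsLocalRing.maximalIdeal O = Ideal.span {π} :=
    (IsDiscreteValuationRing.irreducible_iff_uniformizer π).1 hπ
  have hpiLsmul : piL = (Ideal.span {π} : Ideal O) • L := by
    rw [Submodule.ideal_span_singleton_smul]
    show L.map _ = L.map _
    congr 1
  have hjac : (Ideal.span {π} : Ideal O) ≤ Ideal.jacobson ⊥ := by
    rw [IsLocalRing.jacobson_eq_maximalIdeal ⊥ bot_ne_top, ← hmax]
  have hNN : L ≤ cL' ⊔ (Ideal.span {π} : Ideal O) • L := by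
    rw [← hpiLsmul, ← hLpp]
    exact le_of_eq h.symm
  have hLle : L ≤ cL' := Submodule.le_of_le_smul_of_le_jacobson_bot hL.1 hjac hNN
  have heq : L'.map (scAux O (c : K)) = L := le_antisymm hsub hLle
  refine ⟨c⁻¹, ?_⟩
  show L' = L.map (scAux O ((c⁻¹ : Kˣ) : K))
  have hmap := congrArg (Submodule.map (scAux O ((c⁻¹ : Kˣ) : K))) heq
  rw [map_scAux_map_scAux] at hmap
  rw [← hmap]
  have h1 : ((c⁻¹ : Kˣ) : K) * (c : K) = 1 := by
    rw [← Units.val_mul, inv_mul_cancel, Units.val_one]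
  rw [h1]
  have hid : scAux O (1 : K) = (LinearMap.id : V →ₗ[O] V) := by
    ext x
    simp [scAux_apply]
  rw [hid, Submodule.map_id]
end

section
/- Let O be a discrete valuation ring with uniformizer π, fraction field K, let V and W be finite-dimensional K-vector spaces carrying representations of a group G, let L_V ⊆ V and L_W ⊆ W be G-stable lattices, and let L denote the image of L_V ⊗_O L_W in V ⊗_K W (a G-stable lattice for the diagonal action of G). Assume that the only G-stable O-submodules between πL and L are πL and L itself (i.e. L/πL is simple under the diagonal G-action). Then every G-stable lattice of V ⊗_K W for the diagonal action is of the form c·L for some c ∈ K^×; in particular every G-stable lattice of V ⊗_K W is, up to scalar, the tensor product of a G-stable lattice of V with a G-stable lattice of W. -/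
open TensorProduct

/-- The image of `L_V ⊗_O L_W` in `V ⊗_K W`: the `O`-submodule generated by the
elementary tensors `x ⊗ y` with `x ∈ L_V`, `y ∈ L_W`. -/
noncomputable def tensorLattice {O K V W : Type*} [CommRing O] [Field K] [Algebra O K]
    [AddCommGroup V] [Module K V] [Module O V] [IsScalarTower O K V]
    [AddCommGroup W] [Module K W] [Module O W] [IsScalarTower O K W]
    (LV : Submodule O V) (LW : Submodule O W) : Submodule O (V ⊗[K] W) :=
  Submodule.span O (Set.image2 (fun x y => x ⊗ₜ[K] y) (LV : Set V) (LW : Set W))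

section Helpers

variable {O K M : Type*} [CommRing O] [IsDomain O] [Field K] [Algebra O K]
    [IsFractionRing O K] [AddCommGroup M] [Module K M] [Module O M] [IsScalarTower O K M]

/-- Clearing denominators for a single vector. -/
lemma exists_scalar_smul_mem (B : Submodule O M)
    (hB : Submodule.span K (B : Set M) = ⊤) (x : M) :
    ∃ a : O, a ≠ 0 ∧ a • x ∈ B := by
  have hx : x ∈ Submodule.span K (B : Set M) := by rw [hB]; trivial
  induction hx using Submodule.span_induction with
  | mem z hz => exact ⟨1, one_ne_zero, by simpa using hz⟩
  | zero => exact ⟨1, one_ne_zero, by simp⟩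
  | add y z _ _ hy hz =>
      obtain ⟨a, ha, hay⟩ := hy
      obtain ⟨b, hb, hbz⟩ := hz
      refine ⟨a * b, mul_ne_zero ha hb, ?_⟩
      rw [smul_add]
      exact B.add_mem (by rw [mul_comm, mul_smul]; exact B.smul_mem b hay)
        (by rw [mul_smul]; exact B.smul_mem a hbz)
  | smul c y _ hy =>
      obtain ⟨a, ha, hay⟩ := hy
      obtain ⟨r, s, hs, hrs⟩ := IsFractionRing.div_surjective (A := O) c
      have hs0 : s ≠ 0 := nonZeroDivisors.ne_zero hs
      have hsK : (algebraMap O K) s ≠ 0 := fun h =>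
        hs0 (IsFractionRing.injective O K (by simpa using h))
      refine ⟨s * a, mul_ne_zero hs0 ha, ?_⟩
      have : (s * a) • (c • y) = r • (a • y) := by
        rw [← IsScalarTower.algebraMap_smul K (s * a), ← IsScalarTower.algebraMap_smul K r,
          ← IsScalarTower.algebraMap_smul K a y, smul_smul, smul_smul, ← hrs]
        congr 1
        rw [map_mul]
        field_simp
      rw [this]
      exact B.smul_mem r hay

/-- Clearing denominators for a finitely generated submodule. -/
lemma exists_scalar_smul_le (A B : Submodule O M) (hA : A.FG)
    (hB : Submodule.span K (B : Set M) = ⊤) :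
    ∃ a : O, a ≠ 0 ∧ ∀ x ∈ A, a • x ∈ B := by
  obtain ⟨s, rfl⟩ := hA
  choose f hf0 hf using fun x : {x // x ∈ s} => exists_scalar_smul_mem B hB (x : M)
  refine ⟨∏ x ∈ s.attach, f x, Finset.prod_ne_zero_iff.mpr fun x _ => hf0 x, ?_⟩
  intro x hx
  have : (Submodule.span O (s : Set M)) ≤
      B.comap (LinearMap.lsmul O M (∏ x ∈ s.attach, f x)) := by
    rw [Submodule.span_le]
    intro g hg
    obtain ⟨c, hc⟩ := Finset.dvd_prod_of_mem f (Finset.mem_attach s ⟨g, hg⟩)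
    show g ∈ B.comap (LinearMap.lsmul O M (∏ x ∈ s.attach, f x))
    rw [Submodule.mem_comap, LinearMap.lsmul_apply, hc, mul_comm, mul_smul]
    exact B.smul_mem c (hf ⟨g, hg⟩)
  exact this hx

end Helpers

/-- Let `O` be a discrete valuation ring with uniformizer `π` and fraction field `K`,
let `V`, `W` be finite-dimensional `K`-vector spaces with representations of a group
`G`, let `L_V`, `L_W` be `G`-stable lattices and let `L` be the image of `L_V ⊗_O L_W`
in `V ⊗_K W`, a `G`-stable lattice for the diagonal action `ρ` of `G`.  If the only
`G`-stable `O`-submodules between `πL` and `L` are `πL` and `L` (i.e. `L/πL` is simple),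
then every `G`-stable lattice of `V ⊗_K W` for the diagonal action is of the form `c·L`
with `c ∈ K^×`; in particular every `G`-stable lattice of `V ⊗_K W` is, up to scalar,
the tensor product of a `G`-stable lattice of `V` with a `G`-stable lattice of `W`. -/
theorem tensor_stable_lattice_unique_up_to_homothety
    {O K V W G : Type*} [CommRing O] [IsDomain O] [IsDiscreteValuationRing O]
    [Field K] [Algebra O K] [IsFractionRing O K]
    [AddCommGroup V] [Module K V] [FiniteDimensional K V]
    [Module O V] [IsScalarTower O K V]
    [AddCommGroup W] [Module K W] [FiniteDimensional K W]
    [Module O W] [IsScalarTower O K W]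
    [Group G] (ρV : G →* (V ≃ₗ[K] V)) (ρW : G →* (W ≃ₗ[K] W))
    (ρ : G →* ((V ⊗[K] W) ≃ₗ[K] (V ⊗[K] W)))
    (hρ : ∀ g : G, ρ g = TensorProduct.congr (ρV g) (ρW g))
    (π : O) (hπ : Irreducible π)
    (LV : Submodule O V) (hLV : IsStableLattice ρV LV)
    (LW : Submodule O W) (hLW : IsStableLattice ρW LW)
    (hsimple : ∀ L'' : Submodule O (V ⊗[K] W),
      (∀ g : G, L''.map ((ρ g).toLinearMap.restrictScalars O) = L'') →
      (tensorLattice LV LW).map (LinearMap.lsmul O (V ⊗[K] W) π) ≤ L'' →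
      L'' ≤ tensorLattice LV LW →
      L'' = (tensorLattice LV LW).map (LinearMap.lsmul O (V ⊗[K] W) π) ∨
        L'' = tensorLattice LV LW) :
    ∀ L' : Submodule O (V ⊗[K] W), IsStableLattice ρ L' →
      (∃ c : Kˣ,
        L' = (tensorLattice LV LW).map
          ((LinearMap.lsmul K (V ⊗[K] W) (c : K)).restrictScalars O)) ∧
      (∃ (ΓV : Submodule O V) (ΓW : Submodule O W) (c : Kˣ),
        IsStableLattice ρV ΓV ∧ IsStableLattice ρW ΓW ∧
        L' = (tensorLattice ΓV ΓW).map
          ((LinearMap.lsmul K (V ⊗[K] W) (c : K)).restrictScalars O)) := by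
  intro L' hL'
  rcases subsingleton_or_nontrivial (V ⊗[K] W) with hss | hnt
  · haveI := hss
    have heq : ∀ A B : Submodule O (V ⊗[K] W), A = B := fun A B => Subsingleton.elim A B
    constructor
    · exact ⟨1, heq _ _⟩
    · exact ⟨LV, LW, 1, hLV, hLW, heq _ _⟩
  set M : Submodule O (V ⊗[K] W) := tensorLattice LV LW with hMdef
  -- M is finitely generated
  have hMfg : M.FG := by
    let B : V →ₗ[O] W →ₗ[O] (V ⊗[K] W) :=
      { toFun := fun v =>
          { toFun := fun w => v ⊗ₜ[K] w
            map_add' := fun w w' => TensorProduct.tmul_add v w w'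
            map_smul' := fun a w => by
              simp only [RingHom.id_apply]
              rw [← IsScalarTower.algebraMap_smul K a w, TensorProduct.tmul_smul,
                IsScalarTower.algebraMap_smul] }
        map_add' := fun v v' => by ext w; exact TensorProduct.add_tmul v v' w
        map_smul' := fun a v => by
          ext w
          simp only [RingHom.id_apply, LinearMap.coe_mk, AddHom.coe_mk, LinearMap.smul_apply]
          rw [← IsScalarTower.algebraMap_smul K a v, ← TensorProduct.smul_tmul',
            IsScalarTower.algebraMap_smul] }
    have : M = Submodule.map₂ B LV LW := by
      rw [Submodule.map₂_eq_span_image2]; rfl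
    rw [this]
    exact Submodule.FG.map₂ B hLV.1 hLW.1
  -- M spans V ⊗ W over K
  have hMspan : Submodule.span K (M : Set (V ⊗[K] W)) = ⊤ := by
    rw [eq_top_iff, ← TensorProduct.span_tmul_eq_top K V W, Submodule.span_le]
    rintro t ⟨x, y, rfl⟩
    have hinner : ∀ x' ∈ (LV : Set V), ∀ y' ∈ Submodule.span K (LW : Set W),
        x' ⊗ₜ[K] y' ∈ Submodule.span K (M : Set (V ⊗[K] W)) := by
      intro x' hx' y' hy'
      induction hy' using Submodule.span_induction with
      | mem z hz =>
          exact Submodule.subset_span (Submodule.subset_span (Set.mem_image2_of_mem hx' hz))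
      | zero => rw [TensorProduct.tmul_zero]; exact Submodule.zero_mem _
      | add u v _ _ hu hv => rw [TensorProduct.tmul_add]; exact Submodule.add_mem _ hu hv
      | smul c u _ hu => rw [TensorProduct.tmul_smul]; exact Submodule.smul_mem _ c hu
    have hx : x ∈ Submodule.span K (LV : Set V) := by rw [hLV.2.1]; trivial
    have hy : y ∈ Submodule.span K (LW : Set W) := by rw [hLW.2.1]; trivial
    induction hx using Submodule.span_induction with
    | mem z hz => exact hinner z hz y hy
    | zero => rw [TensorProduct.zero_tmul]; exact Submodule.zero_mem _
    | add u v _ _ hu hv => rw [TensorProduct.add_tmul]; exact Submodule.add_mem _ hu hv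
    | smul c u _ hu => rw [← TensorProduct.smul_tmul']; exact Submodule.smul_mem _ c hu
  -- M is G-stable
  have hMstab : ∀ g : G, M.map ((ρ g).toLinearMap.restrictScalars O) = M := by
    intro g
    have hV : (⇑(ρV g)) '' (LV : Set V) = (LV : Set V) := by
      conv_rhs => rw [← hLV.2.2 g]
      rw [Submodule.map_coe]; rfl
    have hW : (⇑(ρW g)) '' (LW : Set W) = (LW : Set W) := by
      conv_rhs => rw [← hLW.2.2 g]
      rw [Submodule.map_coe]; rfl
    rw [hMdef, tensorLattice, Submodule.map_span]
    congr 1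
    have : (⇑((ρ g).toLinearMap.restrictScalars O)) ''
        Set.image2 (fun x y => x ⊗ₜ[K] y) (LV : Set V) (LW : Set W) =
        Set.image2 (fun x y => (ρV g x) ⊗ₜ[K] (ρW g y)) (LV : Set V) (LW : Set W) := by
      rw [Set.image_image2]
      apply Set.image2_congr
      intro x hx y hy
      simp [hρ g]
    rw [this]
    conv_rhs => rw [← hV, ← hW]
    rw [Set.image2_image_left, Set.image2_image_right]
  -- M is nonzero
  have hMne : ∃ v ∈ M, v ≠ (0 : V ⊗[K] W) := by
    by_contra h
    push_neg at h
    have : M = ⊥ := by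
      rw [eq_bot_iff]; intro z hz; simpa using h z hz
    rw [this] at hMspan
    simp at hMspan
  obtain ⟨v, hvM, hv0⟩ := hMne
  -- the uniformizer as a unit of K
  have hπ0 : (algebraMap O K) π ≠ 0 := fun h =>
    hπ.ne_zero (IsFractionRing.injective O K (by simpa using h))
  set u : Kˣ := Units.mk0 _ hπ0 with hu
  have huval : (u : K) = algebraMap O K π := rfl
  set P : ℤ → Prop := fun n => ∀ x ∈ L', ((u ^ n : Kˣ) : K) • x ∈ M with hP
  -- P is monotone
  have hstep : ∀ k : ℤ, P k → P (k + 1) := by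
    intro k hk x hx
    have : ((u ^ (k + 1) : Kˣ) : K) • x = π • (((u ^ k : Kˣ) : K) • x) := by
      rw [← IsScalarTower.algebraMap_smul K π, smul_smul, ← huval, zpow_add_one, Units.val_mul,
        mul_comm]
    rw [this]
    exact M.smul_mem π (hk x hx)
  have hmono : ∀ m n : ℤ, m ≤ n → P m → P n := by
    intro m n hmn hm
    have key : ∀ j : ℕ, P (m + j) := by
      intro j
      induction j with
      | zero => simpa using hm
      | succ j ih =>
          have h2 := hstep (m + j) ih
          have heq2 : m + ((j + 1 : ℕ) : ℤ) = (m + (j : ℤ)) + 1 := by push_cast; ring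
          rwa [heq2]
    have hn : n = m + (((n - m).toNat : ℕ) : ℤ) := by omega
    rw [hn]
    exact key _
  -- P holds for some n
  have hPex : ∃ n : ℤ, P n := by
    obtain ⟨a, ha0, haM⟩ := exists_scalar_smul_le L' M hL'.1 hMspan
    obtain ⟨k, w, hw⟩ := IsDiscreteValuationRing.eq_unit_mul_pow_irreducible ha0 hπ
    refine ⟨(k : ℤ), fun x hx => ?_⟩
    have h1 : ((u ^ (k : ℤ) : Kˣ) : K) • x = (π ^ k) • x := by
      rw [zpow_natCast, Units.val_pow_eq_pow_val, huval, ← map_pow,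
        IsScalarTower.algebraMap_smul]
    have h2 : (π ^ k) • x = (↑w⁻¹ : O) • (a • x) := by
      rw [smul_smul, hw]
      congr 1
      rw [← mul_assoc, Units.inv_mul, one_mul]
    rw [h1, h2]
    exact M.smul_mem _ (haM x hx)
  -- P fails for some n
  have hPnex : ∃ n : ℤ, ¬ P n := by
    by_contra hall
    push_neg at hall
    obtain ⟨b, hb0, hbv⟩ := exists_scalar_smul_mem L' hL'.2.1 v
    have hbK : (algebraMap O K) b ≠ 0 := fun h =>
      hb0 (IsFractionRing.injective O K (by simpa using h))
    set v' : V ⊗[K] W := b • v with hv'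
    have hv'0 : v' ≠ 0 := by
      rw [hv', ← IsScalarTower.algebraMap_smul K b]
      exact smul_ne_zero hbK hv0
    set y : ℕ → V ⊗[K] W := fun j => ((u ^ (-(j : ℤ)) : Kˣ) : K) • v' with hy
    have hyM : ∀ j : ℕ, y j ∈ M := fun j => hall (-(j : ℤ)) (b • v) hbv
    have hy0 : ∀ j : ℕ, y j ≠ 0 := fun j =>
      smul_ne_zero (Units.ne_zero (u ^ (-(j : ℤ)))) hv'0
    have hpi : ∀ j : ℕ, π • y (j + 1) = y j := by
      intro j
      show π • (((u ^ (-((j + 1 : ℕ) : ℤ)) : Kˣ) : K) • v') = ((u ^ (-(j : ℤ)) : Kˣ) : K) • v'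
      rw [← IsScalarTower.algebraMap_smul K π, smul_smul, ← huval, ← Units.val_mul,
        ← zpow_one_add]
      have hexp : (1 : ℤ) + -((j + 1 : ℕ) : ℤ) = -(j : ℤ) := by push_cast; ring
      rw [hexp]
    have hspanmono : Monotone fun j : ℕ =>
        Submodule.comap M.subtype (Submodule.span O {y j}) := by
      apply monotone_nat_of_le_succ
      intro j
      apply Submodule.comap_mono
      rw [Submodule.span_le, Set.singleton_subset_iff]
      rw [← hpi j]
      exact Submodule.smul_mem _ π (Submodule.mem_span_singleton_self _)
    haveI : IsNoetherian O ↥M := isNoetherian_of_fg_of_noetherian M hMfg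
    obtain ⟨n0, hn0⟩ := monotone_stabilizes_iff_noetherian.mpr inferInstance
      ⟨_, hspanmono⟩
    have hstable := hn0 (n0 + 1) (Nat.le_succ n0)
    have hsp : ∀ j : ℕ, Submodule.map M.subtype
        (Submodule.comap M.subtype (Submodule.span O {y j})) = Submodule.span O {y j} := by
      intro j
      rw [Submodule.map_comap_subtype, inf_eq_right]
      rw [Submodule.span_le, Set.singleton_subset_iff]
      exact hyM j
    have hspaneq : Submodule.span O {y n0} = Submodule.span O {y (n0 + 1)} := by
      rw [← hsp n0, ← hsp (n0 + 1)]
      exact congrArg _ hstable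
    have hmem : y (n0 + 1) ∈ Submodule.span O {y n0} := by
      rw [hspaneq]
      exact Submodule.mem_span_singleton_self _
    obtain ⟨a, ha⟩ := Submodule.mem_span_singleton.mp hmem
    have h1 : y n0 = (π * a) • y n0 := by
      conv_lhs => rw [← hpi n0, ← ha]
      rw [smul_smul]
    have h2 : ((1 : O) - π * a) • y n0 = 0 := by
      rw [sub_smul, one_smul, ← h1, sub_self]
    rw [← IsScalarTower.algebraMap_smul K ((1 : O) - π * a)] at h2
    rcases smul_eq_zero.mp h2 with h3 | h3
    · have h4 : (1 : O) - π * a = 0 := IsFractionRing.injective O K (by simpa using h3)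
      exact hπ.not_isUnit (IsUnit.of_mul_eq_one (a := π) a (by linear_combination -h4))
    · exact hy0 n0 h3
  -- take the least n with P n
  obtain ⟨n1, hn1⟩ := hPnex
  have hbdd : ∃ b : ℤ, ∀ z : ℤ, P z → b ≤ z := by
    refine ⟨n1 + 1, fun z hz => ?_⟩
    by_contra hlt
    push_neg at hlt
    exact hn1 (hmono z n1 (by omega) hz)
  obtain ⟨n, hPn, hmin⟩ := Int.exists_least_of_bdd hbdd hPex
  set N : Submodule O (V ⊗[K] W) :=
    L'.map ((LinearMap.lsmul K (V ⊗[K] W) ((u ^ n : Kˣ) : K)).restrictScalars O) with hNdef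
  have hNM : N ≤ M := by
    rintro _ ⟨x, hx, rfl⟩
    exact hPn x hx
  -- N is G-stable
  have hNstab : ∀ g : G, N.map ((ρ g).toLinearMap.restrictScalars O) = N := by
    intro g
    rw [hNdef, ← Submodule.map_comp]
    have hcomm : ((ρ g).toLinearMap.restrictScalars O).comp
        ((LinearMap.lsmul K (V ⊗[K] W) ((u ^ n : Kˣ) : K)).restrictScalars O) =
        ((LinearMap.lsmul K (V ⊗[K] W) ((u ^ n : Kˣ) : K)).restrictScalars O).comp
        ((ρ g).toLinearMap.restrictScalars O) := by
      ext x
      simp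
    rw [hcomm, Submodule.map_comp, hL'.2.2 g]
  -- πM
  set πM : Submodule O (V ⊗[K] W) := M.map (LinearMap.lsmul O (V ⊗[K] W) π) with hπMdef
  have hπM_le : πM ≤ M := by
    rintro _ ⟨y, hy, rfl⟩
    exact M.smul_mem π hy
  have hπM_stab : ∀ g : G, πM.map ((ρ g).toLinearMap.restrictScalars O) = πM := by
    intro g
    rw [hπMdef, ← Submodule.map_comp]
    have hcomm : ((ρ g).toLinearMap.restrictScalars O).comp
        (LinearMap.lsmul O (V ⊗[K] W) π) =
        (LinearMap.lsmul O (V ⊗[K] W) π).comp ((ρ g).toLinearMap.restrictScalars O) := by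
      ext x
      simp only [LinearMap.coe_comp, Function.comp_apply, LinearMap.coe_restrictScalars,
        LinearMap.lsmul_apply, LinearEquiv.coe_coe]
      rw [← IsScalarTower.algebraMap_smul K π x, map_smul, IsScalarTower.algebraMap_smul]
    rw [hcomm, Submodule.map_comp, hMstab g]
  -- apply simplicity to N ⊔ πM
  have hstab'' : ∀ g : G, (N ⊔ πM).map ((ρ g).toLinearMap.restrictScalars O) = N ⊔ πM := by
    intro g
    rw [Submodule.map_sup, hNstab g, hπM_stab g]
  rcases hsimple (N ⊔ πM) hstab'' le_sup_right (sup_le hNM hπM_le) with hcase | hcase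
  · -- impossible: contradicts minimality of n
    exfalso
    have hNle : N ≤ πM := le_sup_left.trans hcase.le
    have hPn1 : P (n - 1) := by
      intro x hx
      have : ((u ^ n : Kˣ) : K) • x ∈ πM :=
        hNle (Submodule.mem_map_of_mem hx)
      obtain ⟨y, hy, hyeq⟩ := this
      have h1 : ((u ^ (n - 1) : Kˣ) : K) • x = ((u⁻¹ : Kˣ) : K) • (((u ^ n : Kˣ) : K) • x) := by
        rw [smul_smul, ← Units.val_mul, zpow_sub_one, mul_comm]
      rw [h1, ← hyeq]
      show ((u⁻¹ : Kˣ) : K) • (π • y) ∈ M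
      rw [← IsScalarTower.algebraMap_smul K π y, smul_smul, ← huval, ← Units.val_mul,
        inv_mul_cancel, Units.val_one, one_smul]
      exact hy
    have := hmin (n - 1) hPn1
    omega
  · -- N ⊔ πM = M ⇒ by Nakayama, N = M
    have hjac : Ideal.span {π} ≤ Ideal.jacobson ⊥ := by
      rw [IsLocalRing.jacobson_eq_maximalIdeal ⊥ bot_ne_top, ← hπ.maximalIdeal_eq]
    have hle : M ≤ N ⊔ (Ideal.span {π} : Ideal O) • M := by
      conv_lhs => rw [← hcase]
      apply sup_le_sup_left
      rintro _ ⟨y, hy, rfl⟩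
      exact Submodule.smul_mem_smul (Ideal.mem_span_singleton_self π) hy
    have hMN : M ≤ N := Submodule.le_of_le_smul_of_le_jacobson_bot hMfg hjac hle
    have hNMeq : N = M := le_antisymm hNM hMN
    -- conclude
    have hfinal : M.map ((LinearMap.lsmul K (V ⊗[K] W) ((u ^ (-n) : Kˣ) : K)).restrictScalars O)
        = L' := by
      rw [← hNMeq, hNdef, ← Submodule.map_comp]
      have : ((LinearMap.lsmul K (V ⊗[K] W) ((u ^ (-n) : Kˣ) : K)).restrictScalars O).comp
          ((LinearMap.lsmul K (V ⊗[K] W) ((u ^ n : Kˣ) : K)).restrictScalars O) =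
          LinearMap.id := by
        ext x
        simp only [LinearMap.coe_comp, Function.comp_apply, LinearMap.coe_restrictScalars,
          LinearMap.lsmul_apply, LinearMap.id_coe, id_eq]
        rw [smul_smul, ← Units.val_mul, ← zpow_add, neg_add_cancel, zpow_zero, Units.val_one,
          one_smul]
      rw [this, Submodule.map_id]
    exact ⟨⟨u ^ (-n), hfinal.symm⟩, LV, LW, u ^ (-n), hLV, hLW, hfinal.symm⟩
end
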